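/- Let T be a finite TD-unmixed balanced tree with vertex set V. Then there exists a simplicial complex Δ on the vertex set V_even(T) such that Δ is an unmixed simplicial tree (or a simplex, or the empty complex) and N_odd(T) = F(Δ), the facet ideal of Δ. Concretely, when height(T)=3 one may take Δ to be the complex whose facets are the sets N(v) for v ∈ V_odd(T). -/

import Mathlib

open scoped Classical

section GraphDefs

variable {V : Type} (G : SimpleGraph V)

/-- A leaf is a vertex of degree 1. -/
def IsLeafVx (v : V) : Prop := (G.neighborSet v).ncard = 1

/-- The height of a vertex: the minimum distance to a leaf in its connected
component (`0` if there is no leaf reachable from it, e.g. for isolated vertices). -/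
noncomputable def heightVx (v : V) : ℕ :=
  sInf {n | ∃ l, IsLeafVx G l ∧ G.Reachable v l ∧ G.dist v l = n}

/-- The height of a graph: the maximum height of a vertex. -/
noncomputable def heightGr : ℕ := sSup (Set.range (heightVx G))

/-- A graph is balanced if no two adjacent vertices have the same height. -/
def IsBalanced : Prop := ∀ u w, G.Adj u w → heightVx G u ≠ heightVx G w

/-- The open neighborhood of a set of vertices. -/
def nbhd (S : Set V) : Set V := {u | ∃ v ∈ S, G.Adj v u}

/-- A total dominating set: `N(S) = V`. -/
def IsTDSet (S : Set V) : Prop := nbhd G S = Set.univ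

/-- A minimal total dominating set. -/
def IsMinTDSet (S : Set V) : Prop := IsTDSet G S ∧ ∀ S' ⊂ S, ¬ IsTDSet G S'

/-- A graph is TD-unmixed if all of its minimal total dominating sets have
the same cardinality. -/
def TDUnmixed : Prop :=
  ∀ S₁ S₂ : Set V, IsMinTDSet G S₁ → IsMinTDSet G S₂ → S₁.ncard = S₂.ncard

/-- A forest is TD-unmixed if every connected component is TD-unmixed. -/
def ComponentwiseTDUnmixed : Prop :=
  ∀ c : G.ConnectedComponent, TDUnmixed (G.induce c.supp)

end GraphDefs

section GVDDefs

/-- The squarefree monomial whose support is the finite set `s`. -/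
noncomputable def sqMono (k : Type) [Field k] {σ : Type} (s : Finset σ) : MvPolynomial σ k :=
  ∏ i ∈ s, MvPolynomial.X i

/-- The squarefree monomial ideal generated by the monomials with supports in `F`. -/
noncomputable def sqSpan (k : Type) [Field k] {σ : Type} (F : Set (Finset σ)) :
    Ideal (MvPolynomial σ k) :=
  Ideal.span {m | ∃ s ∈ F, m = sqMono k s}

/-- The height of a prime ideal. -/
noncomputable def primeHt {R : Type*} [CommRing R] (P : Ideal R) (hP : P.IsPrime) : ℕ∞ :=
  Order.height (⟨P, hP⟩ : PrimeSpectrum R)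

/-- An ideal is unmixed if all of its minimal primes have the same height. -/
def UnmixedIdeal {R : Type*} [CommRing R] (I : Ideal R) : Prop :=
  ∀ P Q : Ideal R, ∀ hP : P ∈ I.minimalPrimes, ∀ hQ : Q ∈ I.minimalPrimes,
    primeHt P hP.1.1 = primeHt Q hQ.1.1

/-- View a finset of `σ` as a finset of `{x : σ // x ≠ y}` (dropping `y`). -/
noncomputable def dropVar {σ : Type} (y : σ) (s : Finset σ) : Finset {x : σ // x ≠ y} :=
  s.subtype (· ≠ y)

/-- Supports of the generators of `N_{y,I}`: the given generators not divisible by `y`. -/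
def NFam {σ : Type} (y : σ) (F : Set (Finset σ)) : Set (Finset σ) := {s ∈ F | y ∉ s}

/-- Supports of the generators of `C_{y,I}`: the given generators with `y` divided out
(together with the generators not divisible by `y`). -/
noncomputable def CFam {σ : Type} (y : σ) (F : Set (Finset σ)) : Set (Finset σ) :=
  (fun s => s.erase y) '' F

/-- A squarefree monomial ideal `I` is geometrically vertex decomposable if it is unmixed
and either (1) `I = ⟨1⟩` or `I` is generated by a subset of the variables, or (2) there is
a set of squarefree monomial generators of `I` and a variable `y` such that
`I = C_{y,I} ∩ (N_{y,I} + ⟨y⟩)` and both `C_{y,I}` and `N_{y,I}` are geometrically vertex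
decomposable in the polynomial ring omitting the variable `y`. -/
inductive IsGVD (k : Type) [Field k] : (σ : Type) → Ideal (MvPolynomial σ k) → Prop where
  | base (σ : Type) (I : Ideal (MvPolynomial σ k)) (hunm : UnmixedIdeal I)
      (h : I = ⊤ ∨ ∃ W : Set σ, I = Ideal.span (MvPolynomial.X '' W)) : IsGVD k σ I
  | step (σ : Type) (I : Ideal (MvPolynomial σ k)) (hunm : UnmixedIdeal I)
      (F : Set (Finset σ)) (hgen : I = sqSpan k F) (y : σ)
      (hdec : I = sqSpan k (CFam y F) ⊓ (sqSpan k (NFam y F) ⊔ Ideal.span {MvPolynomial.X y}))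
      (hC : IsGVD k {x : σ // x ≠ y} (sqSpan k (dropVar y '' CFam y F)))
      (hN : IsGVD k {x : σ // x ≠ y} (sqSpan k (dropVar y '' NFam y F))) :
      IsGVD k σ I

end GVDDefs

section ONIDefs

variable {V : Type} [Fintype V]

/-- The open neighborhood of a vertex, as a finset. -/
noncomputable def nbrFinset (G : SimpleGraph V) (v : V) : Finset V :=
  (Set.toFinite (G.neighborSet v)).toFinset

/-- The odd-open neighborhood ideal of a (balanced) graph: generated by the monomials
`X_{N(v)}` for the vertices `v` of odd height. -/
noncomputable def oddONI (k : Type) [Field k] (G : SimpleGraph V) : Ideal (MvPolynomial V k) :=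
  sqSpan k {s | ∃ v : V, Odd (heightVx G v) ∧ s = nbrFinset G v}

end ONIDefs

section SimplicialDefs

variable {W : Type}

/-- A collection of finsets is downward closed (i.e. is a simplicial complex). -/
def DownClosed (Δ : Set (Finset W)) : Prop := ∀ s ∈ Δ, ∀ t ⊆ s, t ∈ Δ

/-- The facets (maximal faces) of a simplicial complex. -/
def facetsCx (Δ : Set (Finset W)) : Set (Finset W) :=
  {s ∈ Δ | ∀ t ∈ Δ, s ⊆ t → s = t}

/-- A vertex cover of a simplicial complex: a set of vertices meeting every facet. -/
def IsVertexCoverCx (Δ : Set (Finset W)) (S : Set W) : Prop :=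
  ∀ F ∈ facetsCx Δ, ∃ w ∈ S, w ∈ F

/-- A minimal vertex cover. -/
def IsMinVertexCoverCx (Δ : Set (Finset W)) (S : Set W) : Prop :=
  IsVertexCoverCx Δ S ∧ ∀ S' ⊂ S, ¬ IsVertexCoverCx Δ S'

/-- A simplicial complex is unmixed if all of its minimal vertex covers have the same
cardinality. -/
def UnmixedCx (Δ : Set (Finset W)) : Prop :=
  ∀ S₁ S₂ : Set W, IsMinVertexCoverCx Δ S₁ → IsMinVertexCoverCx Δ S₂ →
    S₁.ncard = S₂.ncard

/-- A simplicial complex is connected if any two of its vertices are joined by a chain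
of pairwise intersecting facets. -/
def ConnectedCx (Δ : Set (Finset W)) : Prop :=
  ∀ u v : W, (∃ s ∈ Δ, u ∈ s) → (∃ s ∈ Δ, v ∈ s) →
    ∃ (n : ℕ) (f : Fin (n + 1) → Finset W),
      (∀ i, f i ∈ facetsCx Δ) ∧ u ∈ f 0 ∧ v ∈ f (Fin.last n) ∧
      ∀ i : Fin n, ((f i.castSucc : Set W) ∩ (f i.succ : Set W)).Nonempty

/-- A simplicial leaf: a facet `L` such that `L` is the only facet, or there is a facet
`G ≠ L` (a joint) with `L ∩ F ⊆ L ∩ G` for every facet `F ≠ L`. -/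
def IsSimplicialLeaf (Δ : Set (Finset W)) (L : Finset W) : Prop :=
  L ∈ facetsCx Δ ∧
    (facetsCx Δ = {L} ∨
      ∃ G ∈ facetsCx Δ, G ≠ L ∧ ∀ F ∈ facetsCx Δ, F ≠ L →
        (L : Set W) ∩ (F : Set W) ⊆ (L : Set W) ∩ (G : Set W))

/-- The simplicial complex generated by a collection of finsets. -/
def genBy (Fs : Set (Finset W)) : Set (Finset W) := {t | ∃ F ∈ Fs, t ⊆ F}

/-- A simplicial tree: a connected simplicial complex such that removing any nonempty
set of facets leaves a complex that is empty or has a simplicial leaf. -/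
def IsSimplicialTree (Δ : Set (Finset W)) : Prop :=
  ConnectedCx Δ ∧
    ∀ S ⊆ facetsCx Δ, S.Nonempty →
      (genBy (facetsCx Δ \ S) = ∅ ∨ ∃ L, IsSimplicialLeaf (genBy (facetsCx Δ \ S)) L)

/-- The facet ideal of a simplicial complex. -/
noncomputable def facetIdeal (k : Type) [Field k] (Δ : Set (Finset W)) :
    Ideal (MvPolynomial W k) :=
  Ideal.span {m | ∃ F ∈ facetsCx Δ, m = sqMono k F}

end SimplicialDefs


section Lemmas

variable {V : Type} {G : SimpleGraph V}

lemma mem_nbrFinset [Fintype V] {v x : V} : x ∈ nbrFinset G v ↔ G.Adj v x := by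
  simp [nbrFinset, Set.Finite.mem_toFinset]

/-- The set of candidate heights. -/
abbrev htSet (G : SimpleGraph V) (v : V) : Set ℕ :=
  {n | ∃ l, IsLeafVx G l ∧ G.Reachable v l ∧ G.dist v l = n}

lemma heightVx_def (v : V) : heightVx G v = sInf (htSet G v) := rfl

lemma height_le_of_adj {u w : V} (h : G.Adj u w) : heightVx G u ≤ heightVx G w + 1 := by
  by_cases hne : (htSet G w).Nonempty
  · obtain ⟨l, hl, hr, hd⟩ := Nat.sInf_mem hne
    obtain ⟨p, hp⟩ := hr.exists_walk_length_eq_dist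
    have hul : G.dist u l ≤ heightVx G w + 1 := by
      have := SimpleGraph.dist_le (SimpleGraph.Walk.cons h p)
      simp only [SimpleGraph.Walk.length_cons] at this
      rw [heightVx_def]
      omega
    have hmem : G.dist u l ∈ htSet G u := ⟨l, hl, h.reachable.trans hr, rfl⟩
    exact le_trans (Nat.sInf_le hmem) hul
  · have hu : ¬(htSet G u).Nonempty := by
      rintro ⟨n, l, hl, hr, hd⟩
      exact hne ⟨G.dist w l, l, hl, h.symm.reachable.trans hr, rfl⟩
    rw [Set.not_nonempty_iff_eq_empty] at hu
    rw [heightVx_def, hu, Nat.sInf_empty]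
    omega

lemma height_parity_of_adj (hbal : IsBalanced G) {u w : V} (h : G.Adj u w) :
    heightVx G u % 2 ≠ heightVx G w % 2 := by
  have h1 := height_le_of_adj h
  have h2 := height_le_of_adj h.symm
  have h3 := hbal u w h
  omega

end Lemmas

section Lemmas2

variable {V : Type} {G : SimpleGraph V}

lemma exists_two_nbrs [Fintype V] {v : V} (hv : Odd (heightVx G v)) :
    ∃ x y, G.Adj v x ∧ G.Adj v y ∧ x ≠ y := by
  have hv0 : heightVx G v ≠ 0 := by
    intro h0; rw [h0] at hv; simp at hv
  have hne : (htSet G v).Nonempty := by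
    by_contra hne
    rw [Set.not_nonempty_iff_eq_empty] at hne
    rw [heightVx_def, hne, Nat.sInf_empty] at hv0; exact hv0 rfl
  obtain ⟨l, hl, hr, hd⟩ := Nat.sInf_mem hne
  rw [← heightVx_def] at hd
  have hlv : l ≠ v := by
    intro h; subst h; rw [SimpleGraph.dist_self] at hd; exact hv0 hd.symm
  obtain ⟨p, hp⟩ := hr.exists_walk_length_eq_dist
  -- v has at least one neighbor
  obtain ⟨x, hx⟩ : ∃ x, G.Adj v x := by
    cases p with
    | nil => exact absurd rfl hlv
    | cons h q => exact ⟨_, h⟩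
  by_cases h2 : ∃ y, G.Adj v y ∧ y ≠ x
  · obtain ⟨y, hy, hyx⟩ := h2
    exact ⟨x, y, hx, hy, hyx.symm⟩
  · push_neg at h2
    have hNv : G.neighborSet v = {x} := by
      ext z; simp only [SimpleGraph.mem_neighborSet, Set.mem_singleton_iff]
      exact ⟨fun hz => h2 z hz, fun hz => hz ▸ hx⟩
    have hleaf : IsLeafVx G v := by
      rw [IsLeafVx, hNv]; simp
    have : heightVx G v = 0 := by
      have h0 : (0 : ℕ) ∈ htSet G v := ⟨v, hleaf, SimpleGraph.Reachable.refl v, SimpleGraph.dist_self⟩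
      have := Nat.sInf_le h0
      rw [heightVx_def]; omega
    exact absurd this hv0

lemma common_nbr_unique (hac : G.IsAcyclic) {u v x y : V} (huv : u ≠ v)
    (hux : G.Adj u x) (hxv : G.Adj x v) (huy : G.Adj u y) (hyv : G.Adj y v) : x = y := by
  by_contra hxy
  have hp1 : (SimpleGraph.Walk.cons hux (SimpleGraph.Walk.cons hxv SimpleGraph.Walk.nil)).IsPath := by
    simp [SimpleGraph.Walk.isPath_def, hux.ne, huv, hxv.ne]
  have hp2 : (SimpleGraph.Walk.cons huy (SimpleGraph.Walk.cons hyv SimpleGraph.Walk.nil)).IsPath := by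
    simp [SimpleGraph.Walk.isPath_def, huy.ne, huv, hyv.ne]
  have := hac.path_unique ⟨_, hp1⟩ ⟨_, hp2⟩
  have heq := congrArg (fun p : G.Path u v => (p : G.Walk u v).getVert 1) this
  simp only [SimpleGraph.Walk.getVert_cons_succ, SimpleGraph.Walk.getVert_zero] at heq
  exact hxy heq

lemma nbr_antichain [Fintype V] (hac : G.IsAcyclic) {u v : V}
    (hu : Odd (heightVx G u)) (hv : Odd (heightVx G v))
    (hsub : nbrFinset G u ⊆ nbrFinset G v) : u = v := by
  by_contra huv
  obtain ⟨x, y, hx, hy, hxy⟩ := exists_two_nbrs hu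
  have hxv : G.Adj v x := mem_nbrFinset.mp (hsub (mem_nbrFinset.mpr hx))
  have hyv : G.Adj v y := mem_nbrFinset.mp (hsub (mem_nbrFinset.mpr hy))
  exact hxy (common_nbr_unique hac huv hx hxv.symm hy hyv.symm)

lemma facets_genBy {F : Set (Finset V)} (hanti : ∀ s ∈ F, ∀ t ∈ F, s ⊆ t → s = t) :
    facetsCx (genBy F) = F := by
  ext s
  constructor
  · rintro ⟨⟨F₁, hF₁, hsF₁⟩, hmax⟩
    have : s = F₁ := hmax F₁ ⟨F₁, hF₁, le_refl _⟩ hsF₁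
    exact this ▸ hF₁
  · intro hs
    refine ⟨⟨s, hs, le_refl _⟩, ?_⟩
    rintro t ⟨F₁, hF₁, htF₁⟩ hst
    have h1 : s ⊆ F₁ := hst.trans htF₁
    have h2 : s = F₁ := hanti s hs F₁ hF₁ h1
    exact Finset.Subset.antisymm hst (h2 ▸ htF₁)

end Lemmas2

section Lemmas3

open SimpleGraph Walk

variable {V : Type} {G : SimpleGraph V}

/-- In a tree, a vertex has at most one neighbor closer to the root. -/
lemma parent_unique (hconn : G.Connected) (hac : G.IsAcyclic) {r x a b : V}
    (hax : G.Adj a x) (hbx : G.Adj b x)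
    (hda : G.dist r a + 1 = G.dist r x) (hdb : G.dist r b + 1 = G.dist r x) : a = b := by
  classical
  by_contra hab
  obtain ⟨qa, hqa, hqal⟩ := hconn.exists_path_of_dist r a
  obtain ⟨qb, hqb, hqbl⟩ := hconn.exists_path_of_dist r b
  have hxa : x ∉ qa.support := by
    intro hx
    have h1 := SimpleGraph.Walk.length_takeUntil_le qa hx
    have h2 := SimpleGraph.dist_le (qa.takeUntil x hx)
    omega
  have hxb : x ∉ qb.support := by
    intro hx
    have h1 := SimpleGraph.Walk.length_takeUntil_le qb hx
    have h2 := SimpleGraph.dist_le (qb.takeUntil x hx)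
    omega
  have hp1 : ((SimpleGraph.Walk.cons hax.symm qa.reverse).reverse).IsPath := by
    apply SimpleGraph.Walk.IsPath.reverse
    exact SimpleGraph.Walk.IsPath.cons hqa.reverse (by simpa using hxa)
  have hp2 : ((SimpleGraph.Walk.cons hbx.symm qb.reverse).reverse).IsPath := by
    apply SimpleGraph.Walk.IsPath.reverse
    exact SimpleGraph.Walk.IsPath.cons hqb.reverse (by simpa using hxb)
  have := hac.path_unique ⟨_, hp1⟩ ⟨_, hp2⟩
  have heq := congrArg (fun p : G.Path r x => ((p : G.Walk r x).reverse).getVert 1) this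
  simp only [SimpleGraph.Walk.reverse_reverse, SimpleGraph.Walk.getVert_cons_succ,
    SimpleGraph.Walk.getVert_zero] at heq
  exact hab heq

/-- If `dist r z = n + 1` then `z` has a neighbor at distance `n` from `r`. -/
lemma exists_adj_dist (hconn : G.Connected) {r z : V} {n : ℕ} (hd : G.dist r z = n + 1) :
    ∃ z', G.Adj z' z ∧ G.dist r z' = n := by
  obtain ⟨p, hp⟩ := hconn.exists_walk_length_eq_dist r z
  obtain ⟨z', hadj, q, hlen⟩ : ∃ (z' : V) (_ : G.Adj z z') (q : G.Walk z' r), q.length = n := by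
    rcases hq : p.reverse with _ | ⟨hadj, q⟩
    · have := congrArg SimpleGraph.Walk.length hq
      simp at hd
    · refine ⟨_, hadj, q, ?_⟩
      have := congrArg SimpleGraph.Walk.length hq
      simp [hp, hd] at this
      omega
  refine ⟨z', hadj.symm, ?_⟩
  have h1 : G.dist r z' ≤ n := by
    have := SimpleGraph.dist_le q
    rw [SimpleGraph.dist_comm]
    omega
  have h2 : n ≤ G.dist r z' := by
    obtain ⟨s, hs⟩ := hconn.exists_walk_length_eq_dist r z'
    have := SimpleGraph.dist_le (s.concat hadj.symm)
    rw [SimpleGraph.Walk.length_concat, hs, hd] at this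
    omega
  omega

/-- Height parity is determined by distance parity from a fixed root. -/
lemma height_dist_parity (hbal : IsBalanced G) (hconn : G.Connected) (r : V) :
    ∀ n, ∀ z : V, G.dist r z = n →
      (heightVx G z + G.dist r z) % 2 = heightVx G r % 2 := by
  intro n
  induction n with
  | zero =>
    intro z hz
    have : r = z := (hconn.dist_eq_zero_iff).mp hz
    subst this; simp [hz]
  | succ m ih =>
    intro z hz
    obtain ⟨z', hadj, hz'⟩ := exists_adj_dist hconn hz
    have hpar := height_parity_of_adj hbal hadj
    have := ih z' hz'
    rw [hz'] at this
    rw [hz]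
    omega

/-- Adjacent vertices are at distance differing by exactly one from any root. -/
lemma adj_dist_step (hbal : IsBalanced G) (hconn : G.Connected) {r x v : V} (h : G.Adj x v) :
    G.dist r x + 1 = G.dist r v ∨ G.dist r v + 1 = G.dist r x := by
  have h1 : G.dist r x ≤ G.dist r v + 1 := by
    obtain ⟨s, hs⟩ := hconn.exists_walk_length_eq_dist r v
    have := SimpleGraph.dist_le (s.concat h.symm)
    rw [SimpleGraph.Walk.length_concat, hs] at this
    omega
  have h2 : G.dist r v ≤ G.dist r x + 1 := by
    obtain ⟨s, hs⟩ := hconn.exists_walk_length_eq_dist r x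
    have := SimpleGraph.dist_le (s.concat h)
    rw [SimpleGraph.Walk.length_concat, hs] at this
    omega
  have p1 := height_dist_parity hbal hconn r _ x rfl
  have p2 := height_dist_parity hbal hconn r _ v rfl
  have hpar := height_parity_of_adj hbal h
  omega

end Lemmas3

section Lemmas4

variable {V : Type} {G : SimpleGraph V}

/-- The family of odd-height neighborhoods. -/
abbrev oddFam (G : SimpleGraph V) [Fintype V] : Set (Finset V) :=
  {s | ∃ v : V, Odd (heightVx G v) ∧ s = nbrFinset G v}

lemma oddFam_antichain [Fintype V] (hac : G.IsAcyclic) {F₁ : Set (Finset V)}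
    (hsub : F₁ ⊆ oddFam G) : ∀ s ∈ F₁, ∀ t ∈ F₁, s ⊆ t → s = t := by
  rintro s hs t ht hst
  obtain ⟨u, hu, rfl⟩ := hsub hs
  obtain ⟨v, hv, rfl⟩ := hsub ht
  rw [nbr_antichain hac hu hv hst]

lemma key_step (hbal : IsBalanced G) (hconn : G.Connected) (hac : G.IsAcyclic)
    {r v u x : V} (hmax : G.dist r u ≤ G.dist r v) (huv : u ≠ v)
    (hvx : G.Adj v x) (hux : G.Adj u x) : G.dist r x + 1 = G.dist r v := by
  rcases adj_dist_step hbal hconn (r := r) hvx.symm with h | h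
  · exact h
  · rcases adj_dist_step hbal hconn (r := r) hux with h' | h'
    · exact absurd (parent_unique hconn hac hux hvx h' h) huv
    · omega

lemma leaf_of_sub [Fintype V] (hbal : IsBalanced G) (hconn : G.Connected) (hac : G.IsAcyclic)
    {F₁ : Set (Finset V)} (hsub : F₁ ⊆ oddFam G) (hne : F₁.Nonempty) :
    ∃ L, IsSimplicialLeaf (genBy F₁) L := by
  classical
  have hfac : facetsCx (genBy F₁) = F₁ := facets_genBy (oddFam_antichain hac hsub)
  set A : Set V := {v : V | Odd (heightVx G v) ∧ nbrFinset G v ∈ F₁} with hA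
  have hAne : A.Nonempty := by
    obtain ⟨s, hs⟩ := hne
    obtain ⟨v, hv, rfl⟩ := hsub hs
    exact ⟨v, hv, hs⟩
  obtain ⟨r, hr⟩ := hAne
  obtain ⟨v, hvA, hvmax⟩ := Set.exists_max_image A (G.dist r) (Set.toFinite A) ⟨r, hr⟩
  set L : Finset V := nbrFinset G v with hL
  refine ⟨L, ?_, ?_⟩
  · rw [hfac]; exact hvA.2
  by_cases hG : ∃ G₀ ∈ F₁, G₀ ≠ L ∧ ((L : Set V) ∩ (G₀ : Set V)).Nonempty
  · obtain ⟨G₀, hG₀F, hG₀ne, x, hxL, hxG₀⟩ := hG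
    obtain ⟨u, hu, rfl⟩ := hsub hG₀F
    have huA : u ∈ A := ⟨hu, hG₀F⟩
    have huv : u ≠ v := fun h => hG₀ne (by rw [h])
    have hvx : G.Adj v x := mem_nbrFinset.mp (Finset.mem_coe.mp hxL)
    have hux : G.Adj u x := mem_nbrFinset.mp (Finset.mem_coe.mp hxG₀)
    right
    refine ⟨nbrFinset G u, by rw [hfac]; exact hG₀F, hG₀ne, ?_⟩
    rintro F hF hFne z ⟨hzL, hzF⟩
    rw [hfac] at hF
    obtain ⟨w, hw, rfl⟩ := hsub hF
    have hwA : w ∈ A := ⟨hw, hF⟩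
    have hwv : w ≠ v := fun h => hFne (by rw [h])
    have hvz : G.Adj v z := mem_nbrFinset.mp (Finset.mem_coe.mp hzL)
    have hwz : G.Adj w z := mem_nbrFinset.mp (Finset.mem_coe.mp hzF)
    have h1 : G.dist r x + 1 = G.dist r v :=
      key_step hbal hconn hac (hvmax u huA) huv hvx hux
    have h2 : G.dist r z + 1 = G.dist r v :=
      key_step hbal hconn hac (hvmax w hwA) hwv hvz hwz
    have : z = x := parent_unique hconn hac hvz.symm hvx.symm h2 h1
    exact ⟨hzL, this ▸ hxG₀⟩
  · push_neg at hG
    by_cases hsing : ∀ F ∈ F₁, F = L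
    · left
      rw [hfac]
      ext F
      exact ⟨fun h => hsing F h, fun h => h ▸ hvA.2⟩
    · push_neg at hsing
      obtain ⟨G₀, hG₀F, hG₀ne⟩ := hsing
      right
      refine ⟨G₀, by rw [hfac]; exact hG₀F, hG₀ne, ?_⟩
      intro F hF hFne
      rw [hfac] at hF
      rw [hG F hF hFne]
      exact Set.empty_subset _

end Lemmas4

section Lemmas5

variable {V : Type} {G : SimpleGraph V}

lemma chain_lemma [Fintype V] (hbal : IsBalanced G) :
    ∀ n : ℕ, ∀ w₁ w₂ : V, ∀ p : G.Walk w₁ w₂, p.length ≤ n →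
      Odd (heightVx G w₁) → Odd (heightVx G w₂) →
      ∃ (m : ℕ) (f : Fin (m + 1) → Finset V),
        (∀ i, f i ∈ oddFam G) ∧ f 0 = nbrFinset G w₁ ∧ f (Fin.last m) = nbrFinset G w₂ ∧
        ∀ i : Fin m, ((f i.castSucc : Set V) ∩ (f i.succ : Set V)).Nonempty := by
  intro n
  induction n with
  | zero =>
    intro w₁ w₂ p hp h₁ h₂
    interval_cases hl : p.length
    cases p with
    | nil =>
      exact ⟨0, fun _ => nbrFinset G w₁, fun _ => ⟨w₁, h₁, rfl⟩, rfl, rfl, fun i => i.elim0⟩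
    | cons h q => simp at hl
  | succ m ih =>
    intro w₁ w₂ p hp h₁ h₂
    cases p with
    | nil =>
      exact ⟨0, fun _ => nbrFinset G w₁, fun _ => ⟨w₁, h₁, rfl⟩, rfl, rfl, fun i => i.elim0⟩
    | @cons _ a _ hadj q =>
      have haEven : ¬ Odd (heightVx G a) := by
        have := height_parity_of_adj hbal hadj
        rw [Nat.odd_iff] at h₁ ⊢
        omega
      cases q with
      | nil =>
        exact absurd h₂ haEven
      | @cons _ b _ hadj₂ q₂ =>
        have hbOdd : Odd (heightVx G b) := by
          have := height_parity_of_adj hbal hadj₂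
          rw [Nat.odd_iff] at h₁ ⊢
          rw [Nat.odd_iff] at haEven
          omega
        have hq₂ : q₂.length ≤ m := by
          simp only [SimpleGraph.Walk.length_cons] at hp
          omega
        obtain ⟨m', f, hmem, hf0, hflast, hint⟩ := ih b w₂ q₂ hq₂ hbOdd h₂
        refine ⟨m' + 1, Fin.cons (nbrFinset G w₁) f, ?_, ?_, ?_, ?_⟩
        · intro i
          refine Fin.cases ?_ ?_ i
          · exact ⟨w₁, h₁, rfl⟩
          · intro j; simpa using hmem j
        · simp
        · rw [← Fin.succ_last, Fin.cons_succ, hflast]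
        · intro i
          refine Fin.cases ?_ ?_ i
          · simp only [Fin.castSucc_zero, Fin.cons_zero, Fin.cons_succ, hf0]
            exact ⟨a, Finset.mem_coe.mpr (mem_nbrFinset.mpr hadj),
              Finset.mem_coe.mpr (mem_nbrFinset.mpr hadj₂.symm)⟩
          · intro j
            have e1 : (j.succ : Fin (m' + 1)).castSucc = (j.castSucc).succ := by
              rw [Fin.succ_castSucc]
            rw [e1, Fin.cons_succ, Fin.cons_succ]
            exact hint j

end Lemmas5

section Lemmas6

variable {V : Type} {G : SimpleGraph V}

lemma unmixed_main [Fintype V] (hbal : IsBalanced G) (hconn : G.Connected)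
    (hac : G.IsAcyclic) (hunm : TDUnmixed G) : UnmixedCx (genBy (oddFam G)) := by
  classical
  have hfac : facetsCx (genBy (oddFam G)) = oddFam G :=
    facets_genBy (oddFam_antichain hac (subset_refl _))
  intro S₁ S₂ h₁ h₂
  by_cases hodd : ∃ v : V, Odd (heightVx G v)
  case neg =>
    -- no odd vertices: the complex is empty, only minimal cover is ∅
    have hempty : oddFam G = ∅ := by
      ext s; simp only [Set.mem_empty_iff_false, iff_false]
      rintro ⟨v, hv, rfl⟩; exact hodd ⟨v, hv⟩
    have hcov : ∀ S : Set V, IsVertexCoverCx (genBy (oddFam G)) S := by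
      intro S F hF
      rw [hfac, hempty] at hF
      exact absurd hF (Set.notMem_empty F)
    have key : ∀ S : Set V, IsMinVertexCoverCx (genBy (oddFam G)) S → S = ∅ := by
      rintro S ⟨-, hmin⟩
      by_contra hne
      obtain ⟨z, hz⟩ := Set.nonempty_iff_ne_empty.mpr hne
      exact hmin ∅ (Set.empty_ssubset.mpr ⟨z, hz⟩) (hcov ∅)
    rw [key S₁ h₁, key S₂ h₂]
  case pos =>
    obtain ⟨v₀, hv₀⟩ := hodd
    have hnbr : ∀ u : V, ∃ w, G.Adj u w := by
      intro u
      by_cases h : u = v₀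
      · subst h; obtain ⟨x, _, hx, _, _⟩ := exists_two_nbrs hv₀; exact ⟨x, hx⟩
      · obtain ⟨p⟩ := hconn u v₀
        cases p with
        | nil => exact absurd rfl h
        | cons hadj q => exact ⟨_, hadj⟩
    set 𝒯 : Set (Set V) :=
      {T | T ⊆ {v | Odd (heightVx G v)} ∧
        ∀ u : V, Even (heightVx G u) → ∃ w ∈ T, G.Adj u w} with h𝒯
    have hV𝒯 : {v : V | Odd (heightVx G v)} ∈ 𝒯 := by
      refine ⟨subset_refl _, fun u hu => ?_⟩
      obtain ⟨w, hw⟩ := hnbr u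
      refine ⟨w, ?_, hw⟩
      have := height_parity_of_adj hbal hw
      rw [Nat.even_iff] at hu
      rw [Set.mem_setOf_eq, Nat.odd_iff]
      omega
    have hTTne : {n | ∃ T ∈ 𝒯, T.ncard = n}.Nonempty := ⟨_, _, hV𝒯, rfl⟩
    obtain ⟨T, hT𝒯, hTcard⟩ := Nat.sInf_mem hTTne
    have hTmin : ∀ T' ⊂ T, T' ∉ 𝒯 := by
      intro T' hss hmem
      have h1 := Set.ncard_lt_ncard hss (Set.toFinite T)
      have h2 : sInf {n | ∃ T ∈ 𝒯, T.ncard = n} ≤ T'.ncard := Nat.sInf_le ⟨T', hmem, rfl⟩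
      omega
    have key : ∀ S : Set V, IsMinVertexCoverCx (genBy (oddFam G)) S →
        IsMinTDSet G (S ∪ T) ∧ (S ∪ T).ncard = S.ncard + T.ncard := by
      rintro S ⟨hcov, hmin⟩
      have hSeven : ∀ z ∈ S, Even (heightVx G z) := by
        intro z hz
        have hss : S \ {z} ⊂ S := by
          rw [Set.ssubset_def]
          exact ⟨Set.diff_subset, fun h => (h hz).2 rfl⟩
        have hnc := hmin _ hss
        unfold IsVertexCoverCx at hnc
        push_neg at hnc
        obtain ⟨F, hF, hFnone⟩ := hnc
        obtain ⟨w, hwS, hwF⟩ := hcov F hF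
        have hwz : w = z := by
          by_contra hwz
          exact hFnone w ⟨hwS, hwz⟩ hwF
        subst hwz
        rw [hfac] at hF
        obtain ⟨u, hu, rfl⟩ := hF
        have hadj : G.Adj u w := mem_nbrFinset.mp hwF
        have := height_parity_of_adj hbal hadj
        rw [Nat.odd_iff] at hu
        rw [Nat.even_iff]
        omega
      have hdisj : Disjoint S T := by
        rw [Set.disjoint_left]
        intro z hzS hzT
        have h1 := hSeven z hzS
        have h2 := hT𝒯.1 hzT
        rw [Nat.even_iff] at h1
        rw [Set.mem_setOf_eq, Nat.odd_iff] at h2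
        omega
      refine ⟨⟨?_, ?_⟩, Set.ncard_union_eq hdisj (Set.toFinite S) (Set.toFinite T)⟩
      · -- S ∪ T is a TD-set
        rw [IsTDSet, Set.eq_univ_iff_forall]
        intro u
        rcases Nat.even_or_odd (heightVx G u) with hu | hu
        · obtain ⟨w, hwT, hadj⟩ := hT𝒯.2 u hu
          exact ⟨w, Or.inr hwT, hadj.symm⟩
        · have hFmem : nbrFinset G u ∈ facetsCx (genBy (oddFam G)) := by
            rw [hfac]; exact ⟨u, hu, rfl⟩
          obtain ⟨w, hwS, hwF⟩ := hcov _ hFmem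
          exact ⟨w, Or.inl hwS, (mem_nbrFinset.mp hwF).symm⟩
      · -- minimality
        intro S' hss hTD
        rw [IsTDSet, Set.eq_univ_iff_forall] at hTD
        set S'e : Set V := {z | z ∈ S' ∧ Even (heightVx G z)} with hS'e
        set S'o : Set V := {z | z ∈ S' ∧ Odd (heightVx G z)} with hS'o
        have hS'sub : S' ⊆ S ∪ T := hss.subset
        have hcov' : IsVertexCoverCx (genBy (oddFam G)) S'e := by
          intro F hF
          rw [hfac] at hF
          obtain ⟨u, hu, rfl⟩ := hF
          obtain ⟨z, hzS', hadj⟩ := hTD u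
          have hze : Even (heightVx G z) := by
            have := height_parity_of_adj hbal hadj
            rw [Nat.odd_iff] at hu
            rw [Nat.even_iff]
            omega
          exact ⟨z, ⟨hzS', hze⟩, mem_nbrFinset.mpr hadj.symm⟩
        have hS'eS : S'e ⊆ S := by
          rintro z ⟨hzS', hze⟩
          rcases hS'sub hzS' with h | h
          · exact h
          · have := hT𝒯.1 h
            rw [Set.mem_setOf_eq, Nat.odd_iff] at this
            rw [Nat.even_iff] at hze
            omega
        have hS'eeq : S'e = S := by
          by_contra hne
          exact hmin S'e (Set.ssubset_iff_subset_ne.mpr ⟨hS'eS, hne⟩) hcov'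
        have hS'o𝒯 : S'o ∈ 𝒯 := by
          refine ⟨fun z hz => hz.2, fun u hu => ?_⟩
          obtain ⟨z, hzS', hadj⟩ := hTD u
          have hzo : Odd (heightVx G z) := by
            have := height_parity_of_adj hbal hadj
            rw [Nat.even_iff] at hu
            rw [Nat.odd_iff]
            omega
          exact ⟨z, ⟨hzS', hzo⟩, hadj.symm⟩
        have hS'oT : S'o ⊆ T := by
          rintro z ⟨hzS', hzo⟩
          rcases hS'sub hzS' with h | h
          · have := hSeven z h
            rw [Nat.even_iff] at this
            rw [Nat.odd_iff] at hzo
            omega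
          · exact h
        have hS'oeq : S'o = T := by
          by_contra hne
          exact hTmin S'o (Set.ssubset_iff_subset_ne.mpr ⟨hS'oT, hne⟩) hS'o𝒯
        have : S ∪ T ⊆ S' := by
          rintro z (hz | hz)
          · rw [← hS'eeq] at hz; exact hz.1
          · rw [← hS'oeq] at hz; exact hz.1
        exact absurd (hss.trans_subset this).false (by simp)
    obtain ⟨hmtd₁, hnc₁⟩ := key S₁ h₁
    obtain ⟨hmtd₂, hnc₂⟩ := key S₂ h₂
    have := hunm _ _ hmtd₁ hmtd₂
    omega

end Lemmas6

section Assembly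

variable {V : Type} {G : SimpleGraph V}

lemma downClosed_genBy (F : Set (Finset V)) : DownClosed (genBy F) := by
  rintro s ⟨F₁, hF₁, hs⟩ t ht
  exact ⟨F₁, hF₁, ht.trans hs⟩

lemma even_faces [Fintype V] (hbal : IsBalanced G) :
    ∀ s ∈ genBy (oddFam G), ∀ v ∈ s, Even (heightVx G v) := by
  rintro s ⟨F₁, ⟨w, hw, rfl⟩, hs⟩ v hv
  have hadj : G.Adj w v := mem_nbrFinset.mp (hs hv)
  have := height_parity_of_adj hbal hadj
  rw [Nat.odd_iff] at hw
  rw [Nat.even_iff]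
  omega

lemma simpTree_main [Fintype V] (hbal : IsBalanced G) (hconn : G.Connected)
    (hac : G.IsAcyclic) : IsSimplicialTree (genBy (oddFam G)) := by
  have hfac : facetsCx (genBy (oddFam G)) = oddFam G :=
    facets_genBy (oddFam_antichain hac (subset_refl _))
  constructor
  · -- connected
    rintro u v ⟨s, ⟨F₁, ⟨w₁, hw₁, rfl⟩, hs⟩, hu⟩ ⟨t, ⟨F₂, ⟨w₂, hw₂, rfl⟩, ht⟩, hv⟩
    obtain ⟨p⟩ := hconn w₁ w₂
    obtain ⟨m, f, hmem, hf0, hflast, hint⟩ :=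
      chain_lemma hbal p.length w₁ w₂ p le_rfl hw₁ hw₂
    refine ⟨m, f, fun i => by rw [hfac]; exact hmem i, ?_, ?_, hint⟩
    · rw [hf0]; exact hs hu
    · rw [hflast]; exact ht hv
  · -- every subcollection has a leaf
    intro S hS hSne
    by_cases hne : (facetsCx (genBy (oddFam G)) \ S).Nonempty
    · right
      apply leaf_of_sub hbal hconn hac
      · rw [hfac] at hne ⊢
        exact Set.diff_subset
      · rwa [hfac] at hne ⊢
    · left
      rw [Set.not_nonempty_iff_eq_empty] at hne
      rw [hne]
      ext t
      simp [genBy]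

lemma ideal_main (k : Type) [Field k] [Fintype V] (hac : G.IsAcyclic) :
    oddONI k G = facetIdeal k (genBy (oddFam G)) := by
  have hfac : facetsCx (genBy (oddFam G)) = oddFam G :=
    facets_genBy (oddFam_antichain hac (subset_refl _))
  unfold oddONI sqSpan facetIdeal
  rw [hfac]

end Assembly

/-- **Theorem** (Theorem 5.8): for a finite TD-unmixed balanced tree `T` there is a
simplicial complex `Δ` on the vertex set `V_even(T)` which is an unmixed simplicial tree
(or a simplex, or the empty complex) with `N_odd(T) = F(Δ)`.  Concretely, when
`height(T) = 3` one may take `Δ` to be the complex generated by the open neighborhoods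
`N(v)` of the vertices `v ∈ V_odd(T)`. -/
theorem oddONI_eq_facetIdeal_of_simplicialTree (k : Type) [Field k] {V : Type} [Fintype V]
    (G : SimpleGraph V) (htree : G.IsTree) (hbal : IsBalanced G) (hunm : TDUnmixed G) :
    (∃ Δ : Set (Finset V),
      DownClosed Δ ∧
      (∀ s ∈ Δ, ∀ v ∈ s, Even (heightVx G v)) ∧
      UnmixedCx Δ ∧
      (IsSimplicialTree Δ ∨ (∃ F : Finset V, Δ = {t | t ⊆ F}) ∨ Δ = ∅ ∨ Δ = {∅}) ∧
      oddONI k G = facetIdeal k Δ) ∧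
    (heightGr G = 3 →
      DownClosed (genBy {s | ∃ v : V, Odd (heightVx G v) ∧ s = nbrFinset G v}) ∧
      (∀ s ∈ genBy {s | ∃ v : V, Odd (heightVx G v) ∧ s = nbrFinset G v},
        ∀ v ∈ s, Even (heightVx G v)) ∧
      UnmixedCx (genBy {s | ∃ v : V, Odd (heightVx G v) ∧ s = nbrFinset G v}) ∧
      IsSimplicialTree (genBy {s | ∃ v : V, Odd (heightVx G v) ∧ s = nbrFinset G v}) ∧
      oddONI k G
        = facetIdeal k (genBy {s | ∃ v : V, Odd (heightVx G v) ∧ s = nbrFinset G v})) := by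
  have hconn := htree.isConnected
  have hac := htree.IsAcyclic
  refine ⟨⟨genBy (oddFam G), downClosed_genBy _, even_faces hbal,
      unmixed_main hbal hconn hac hunm, Or.inl (simpTree_main hbal hconn hac),
      ideal_main k hac⟩,
    fun _ => ⟨downClosed_genBy _, even_faces hbal,
      unmixed_main hbal hconn hac hunm, simpTree_main hbal hconn hac,
      ideal_main k hac⟩⟩
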